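/- For every integer k ≥ 1 and every positive integer n, 2^(2k) · S_{2k}(n) = Σ_{m=1}^{k} R(k,m) · C(2n+m+1, 2m+1). -/

import Mathlib

/-- `S k n = 1^k + 2^k + ⋯ + n^k`, the sum of the `k`-th powers of the first `n`
positive integers. -/
def S (k n : ℕ) : ℕ := ∑ i ∈ Finset.Icc 1 n, i ^ k

/-- `R k m = ∑_{j=0}^m (-1)^j C(2m, j) (m-j)^{2k}`, the sequence A304330. -/
def R (k m : ℕ) : ℤ :=
  ∑ j ∈ Finset.range (m + 1),
    (-1 : ℤ) ^ j * ((2 * m).choose j : ℤ) * (((m - j) ^ (2 * k) : ℕ) : ℤ)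

open Finset

lemma van : ∀ (N : ℕ), ∀ p < N, ∑ j ∈ range (N+1), (-1:ℤ)^j * ((N.choose j : ℕ) : ℤ) * (j:ℤ)^p = 0 := by
  intro N
  induction N with
  | zero => intro p hp; omega
  | succ N ih =>
    intro p hp
    have key : ∑ j ∈ range (N+2), (-1:ℤ)^j * ((N+1).choose j : ℤ) * (j:ℤ)^p
        = ∑ j ∈ range (N+1), (-1:ℤ)^j * (N.choose j : ℤ) * ((j:ℤ)^p - ((j:ℤ)+1)^p) := by
      rw [Finset.sum_range_succ' (fun j => (-1:ℤ)^j * ((N+1).choose j : ℤ) * (j:ℤ)^p) (N+1)]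
      have expand : ∀ i ∈ range (N+1),
          (-1:ℤ)^(i+1) * (((N+1).choose (i+1) : ℕ) : ℤ) * ((i+1 : ℕ):ℤ)^p
          = -((-1:ℤ)^i * (N.choose i : ℤ) * ((i:ℤ)+1)^p)
            + ((-1:ℤ)^(i+1) * (N.choose (i+1) : ℤ) * (((i+1:ℕ):ℤ))^p) := by
        intro i _
        rw [Nat.choose_succ_succ]
        push_cast
        ring
      rw [Finset.sum_congr rfl expand, Finset.sum_add_distrib]
      have shift : ∑ i ∈ range (N+1), (-1:ℤ)^(i+1) * (N.choose (i+1) : ℤ) * (((i+1:ℕ):ℤ))^p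
          = ∑ j ∈ range (N+2), (-1:ℤ)^j * (N.choose j : ℤ) * ((j:ℕ):ℤ)^p
            - (-1:ℤ)^0 * (N.choose 0 : ℤ) * ((0:ℕ):ℤ)^p := by
        rw [Finset.sum_range_succ' (fun j => (-1:ℤ)^j * (N.choose j : ℤ) * ((j:ℕ):ℤ)^p) (N+1)]
        ring
      rw [shift, Finset.sum_range_succ (fun j => (-1:ℤ)^j * (N.choose j : ℤ) * ((j:ℕ):ℤ)^p) (N+1)]
      rw [Nat.choose_succ_self]
      push_cast
      simp only [mul_sub, Finset.sum_sub_distrib, Finset.sum_neg_distrib,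
        Nat.choose_zero_right, Nat.cast_one, one_mul]
      ring
    rw [key]
    have expand2 : ∀ j ∈ range (N+1),
        (-1:ℤ)^j * (N.choose j : ℤ) * ((j:ℤ)^p - ((j:ℤ)+1)^p)
        = ∑ q ∈ range p, -((p.choose q : ℤ) * ((-1:ℤ)^j * (N.choose j : ℤ) * (j:ℤ)^q)) := by
      intro j _
      have hb : ((j:ℤ)+1)^p = ∑ q ∈ range (p+1), (j:ℤ)^q * 1^(p-q) * (p.choose q : ℤ) :=
        add_pow _ _ _
      rw [hb, Finset.sum_range_succ, Finset.sum_neg_distrib]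
      have h2 : ∑ q ∈ range p, ((p.choose q : ℤ) * ((-1:ℤ)^j * (N.choose j : ℤ) * (j:ℤ)^q))
          = (-1:ℤ)^j * (N.choose j : ℤ) * ∑ q ∈ range p, (j:ℤ)^q * 1^(p-q) * (p.choose q : ℤ) := by
        rw [Finset.mul_sum]; exact Finset.sum_congr rfl (fun q _ => by ring)
      rw [h2, Nat.choose_self]
      push_cast
      ring
    rw [Finset.sum_congr rfl expand2, Finset.sum_comm]
    apply Finset.sum_eq_zero
    intro q hq
    have hqN : q < N := by have := Finset.mem_range.mp hq; omega
    rw [Finset.sum_neg_distrib, ← Finset.mul_sum, ih q hqN, mul_zero, neg_zero]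

lemma van2 (N p : ℕ) (c : ℤ) (h : p < N) :
    ∑ j ∈ range (N+1), (-1:ℤ)^j * (N.choose j : ℤ) * (c - (j:ℤ))^p = 0 := by
  have expand : ∀ j ∈ range (N+1), (-1:ℤ)^j * (N.choose j : ℤ) * (c - (j:ℤ))^p
      = ∑ q ∈ range (p+1), (-1:ℤ)^(q+p) * c^q * (p.choose q : ℤ) *
          ((-1:ℤ)^j * (N.choose j : ℤ) * (j:ℤ)^(p-q)) := by
    intro j _
    rw [sub_pow, Finset.mul_sum]
    exact Finset.sum_congr rfl (fun q _ => by ring)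
  rw [Finset.sum_congr rfl expand, Finset.sum_comm]
  apply Finset.sum_eq_zero
  intro q hq
  rw [← Finset.mul_sum, van N (p-q) (by omega), mul_zero]

lemma Rcast (k m : ℕ) :
    R k m = ∑ j ∈ range (m+1), (-1:ℤ)^j * ((2*m).choose j : ℤ) * ((m:ℤ) - (j:ℤ))^(2*k) := by
  unfold R
  apply Finset.sum_congr rfl
  intro j hj
  have hjm : j ≤ m := by have := Finset.mem_range.mp hj; omega
  push_cast [hjm]
  ring

lemma fterm_m (k m : ℕ) (hk : 1 ≤ k) :
    (-1:ℤ)^m * ((2*m).choose m : ℤ) * ((m:ℤ) - (m:ℤ))^(2*k) = 0 := by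
  rw [sub_self, zero_pow (by omega)]
  ring

lemma fullsum (k m : ℕ) (hk : 1 ≤ k) (hm : 1 ≤ m) :
    ∑ j ∈ range (2*m+1), (-1:ℤ)^j * ((2*m).choose j : ℤ) * ((m:ℤ) - (j:ℤ))^(2*k)
      = 2 * R k m := by
  set f : ℕ → ℤ := fun j => (-1:ℤ)^j * ((2*m).choose j : ℤ) * ((m:ℤ) - (j:ℤ))^(2*k) with hf
  have hsplit : ∑ j ∈ range (2*m+1), f j
      = ∑ j ∈ range (m+1), f j + ∑ j ∈ Ico (m+1) (2*m+1), f j := by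
    rw [range_eq_Ico, ← Finset.sum_Ico_consecutive f (by omega : 0 ≤ m+1) (by omega : m+1 ≤ 2*m+1), ← range_eq_Ico]
  have hIco : ∑ j ∈ Ico (m+1) (2*m+1), f j = ∑ i ∈ range m, f (m+1+i) := by
    rw [Finset.sum_Ico_eq_sum_range]
    have : 2*m+1 - (m+1) = m := by omega
    rw [this]
  have hrefl : ∀ i ∈ range m, f (m+1+i) = f (m-1-i) := by
    intro i hi
    have him : i < m := Finset.mem_range.mp hi
    have e1 : m+1+i = (m-1-i) + 2*(i+1) := by omega
    have e2 : (2*m).choose (m+1+i) = (2*m).choose (m-1-i) := by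
      have : m - 1 - i = 2*m - (m+1+i) := by omega
      rw [this, Nat.choose_symm (by omega)]
    have e3 : ((m:ℤ) - ((m+1+i:ℕ):ℤ)) = -((m:ℤ) - ((m-1-i:ℕ):ℤ)) := by
      have h4 : ((m-1-i:ℕ):ℤ) = (m:ℤ) - 1 - (i:ℤ) := by omega
      push_cast [h4]
      ring
    have esign : (-1:ℤ)^(m+1+i) = (-1)^(m-1-i) := by
      rw [e1, pow_add, pow_mul]
      norm_num
    have epow : ((m:ℤ) - ((m+1+i:ℕ):ℤ))^(2*k) = ((m:ℤ) - ((m-1-i:ℕ):ℤ))^(2*k) := by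
      rw [e3, Even.neg_pow (even_two_mul k)]
    simp only [hf]
    rw [esign, e2, epow]
  have hrefl2 : ∑ i ∈ range m, f (m+1+i) = ∑ i ∈ range m, f i := by
    rw [Finset.sum_congr rfl hrefl]
    exact Finset.sum_range_reflect f m
  have hRm : R k m = ∑ i ∈ range m, f i := by
    rw [Rcast, Finset.sum_range_succ, fterm_m k m hk, add_zero]
  have hfm : f m = 0 := by simp only [hf]; exact fterm_m k m hk
  rw [hsplit, hIco, hrefl2, Finset.sum_range_succ, hfm, add_zero, ← hRm]
  ring

lemma Rvanish (k m : ℕ) (hk : 1 ≤ k) (hkm : k < m) : R k m = 0 := by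
  have h := van2 (2*m) (2*k) (m:ℤ) (by omega)
  rw [show 2*m+1 = 2*m+1 from rfl] at h
  have h2 := fullsum k m hk (by omega)
  rw [h] at h2
  linarith

lemma Rzero (k : ℕ) (hk : 1 ≤ k) : R k 0 = 0 := by
  unfold R
  simp [zero_pow (by omega : 2*k ≠ 0)]

lemma chooseidZ (m j : ℕ) (hm : 1 ≤ m) (hj : j + 1 ≤ 2*m - 1) :
    ((j:ℤ)+1) * (2*(m:ℤ) - ((j:ℤ)+1)) * (((2*m).choose (j+1) : ℕ) : ℤ)
      = (2*(m:ℤ))*(2*(m:ℤ)-1) * (((2*m-2).choose j : ℕ) : ℤ) := by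
  obtain ⟨N, hN⟩ : ∃ N, 2*m = N + 2 := ⟨2*m-2, by omega⟩
  have hNe : 2*m - 2 = N := by omega
  rw [hNe, hN]
  have hA := Nat.add_one_mul_choose_eq (N+1) j
  have hB := Nat.choose_succ_right_eq (N+1) j
  have hC := Nat.add_one_mul_choose_eq N j
  have hjN : j ≤ N + 1 := by omega
  have hsub : ((N+1-j : ℕ) : ℤ) = (N:ℤ) + 1 - j := by omega
  have hA' : ((N:ℤ)+2) * ((N+1).choose j : ℤ) = ((N+2).choose (j+1) : ℤ) * ((j:ℤ)+1) := by
    exact_mod_cast congrArg (Nat.cast : ℕ → ℤ) hA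
  have hB' : ((N+1).choose (j+1) : ℤ) * ((j:ℤ)+1) = ((N+1).choose j : ℤ) * ((N:ℤ)+1-(j:ℤ)) := by
    have := congrArg (Nat.cast : ℕ → ℤ) hB
    push_cast at this
    rw [hsub] at this  -- may not be needed
    convert this using 2 <;> omega
  have hC' : ((N:ℤ)+1) * ((N).choose j : ℤ) = ((N+1).choose (j+1) : ℤ) * ((j:ℤ)+1) := by
    exact_mod_cast congrArg (Nat.cast : ℕ → ℤ) hC
  have h2m : 2*(m:ℤ) = (N:ℤ)+2 := by exact_mod_cast congrArg (Nat.cast : ℕ → ℤ) hN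
  rw [h2m]
  linear_combination (-((N:ℤ)+1-(j:ℤ))) * hA' - ((N:ℤ)+2) * hB' - ((N:ℤ)+2) * hC'

lemma Rrec (k m : ℕ) (hm : 1 ≤ m) :
    R (k+1) m = (m:ℤ)^2 * R k m + (2*(m:ℤ))*(2*(m:ℤ)-1) * R k (m-1) := by
  rw [Rcast (k+1) m, Rcast k m, Rcast k (m-1)]
  have expand : ∀ j ∈ range (m+1),
      (-1:ℤ)^j * ((2*m).choose j : ℤ) * ((m:ℤ)-(j:ℤ))^(2*(k+1))
      = (m:ℤ)^2 * ((-1:ℤ)^j * ((2*m).choose j : ℤ) * ((m:ℤ)-(j:ℤ))^(2*k))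
        - (-1:ℤ)^j * ((j:ℤ)*(2*(m:ℤ)-(j:ℤ)) * ((2*m).choose j : ℤ)) * ((m:ℤ)-(j:ℤ))^(2*k) := by
    intro j _
    have hp : ((m:ℤ)-(j:ℤ))^(2*(k+1)) = ((m:ℤ)-(j:ℤ))^(2*k) * ((m:ℤ)-(j:ℤ))^2 := by
      rw [← pow_add]
      congr 1
    rw [hp]; ring
  rw [Finset.sum_congr rfl expand, Finset.sum_sub_distrib, ← Finset.mul_sum]
  have h1 : ∑ j ∈ range (m+1),
        (-1:ℤ)^j * ((j:ℤ)*(2*(m:ℤ)-(j:ℤ)) * ((2*m).choose j:ℤ)) * ((m:ℤ)-(j:ℤ))^(2*k)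
      = - ((2*(m:ℤ))*(2*(m:ℤ)-1) *
          ∑ i ∈ range m, (-1:ℤ)^i * (((2*m-2).choose i:ℤ)) * (((m:ℤ)-1)-(i:ℤ))^(2*k)) := by
    rw [Finset.sum_range_succ'
      (fun j => (-1:ℤ)^j * ((j:ℤ)*(2*(m:ℤ)-(j:ℤ)) * ((2*m).choose j:ℤ)) * ((m:ℤ)-(j:ℤ))^(2*k)) m]
    have e : ∀ i ∈ range m,
        (-1:ℤ)^(i+1) * (((i+1:ℕ):ℤ)*(2*(m:ℤ)-((i+1:ℕ):ℤ)) * ((2*m).choose (i+1):ℤ))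
          * ((m:ℤ)-((i+1:ℕ):ℤ))^(2*k)
        = -((2*(m:ℤ))*(2*(m:ℤ)-1) *
            ((-1:ℤ)^i * ((2*m-2).choose i:ℤ) * (((m:ℤ)-1)-(i:ℤ))^(2*k))) := by
      intro i hi
      have him : i < m := Finset.mem_range.mp hi
      have hc := chooseidZ m i hm (by omega)
      push_cast
      push_cast at hc
      linear_combination ((-1:ℤ)^(i+1) * ((m:ℤ)-1-(i:ℤ))^(2*k)) * hc
    rw [Finset.sum_congr rfl e]
    simp [Finset.sum_neg_distrib, Finset.mul_sum]
  rw [h1]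
  have hm1 : m - 1 + 1 = m := by omega
  rw [hm1]
  have e2 : ∀ i ∈ range m,
      (-1:ℤ)^i * ((2*(m-1)).choose i : ℤ) * (((m-1:ℕ):ℤ)-(i:ℤ))^(2*k)
      = (-1:ℤ)^i * (((2*m-2).choose i:ℤ)) * (((m:ℤ)-1)-(i:ℤ))^(2*k) := by
    intro i _
    have h2 : 2*(m-1) = 2*m-2 := by omega
    have h3 : ((m-1:ℕ):ℤ) = (m:ℤ)-1 := by omega
    rw [h2, h3]
  rw [Finset.sum_congr rfl e2]
  ring

-- c x m := "c_{m+1}(x)" = C(x+m+1, 2m+2) + C(x+m, 2m+2)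
def cc (x m : ℕ) : ℤ := ((x+m+1).choose (2*m+2) : ℤ) + ((x+m).choose (2*m+2) : ℤ)

lemma descStep (x m : ℕ) :
    (x:ℤ)^2 * ((((x+m+1).descFactorial (2*m+2) : ℕ):ℤ) + (((x+m).descFactorial (2*m+2) : ℕ):ℤ))
    = ((m:ℤ)+1)^2 * ((((x+m+1).descFactorial (2*m+2) : ℕ):ℤ) + (((x+m).descFactorial (2*m+2) : ℕ):ℤ))
      + (((x+m+2).descFactorial (2*m+4) : ℕ):ℤ) + (((x+m+1).descFactorial (2*m+4) : ℕ):ℤ) := by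
  -- work with M := m+1 : A = desc (x+M) (2M), B = desc (x+M-1) (2M) = desc (x+m) (2m+2)
  have h1 : (((x+m+1).descFactorial (2*m+3) : ℕ):ℤ)
      = ((x:ℤ) - ((m:ℤ)+1)) * (((x+m+1).descFactorial (2*m+2) : ℕ):ℤ) := by
    rcases le_or_gt (m+1) x with h | h
    · have e : (x+m+1).descFactorial (2*m+3) = (x - (m+1)) * (x+m+1).descFactorial (2*m+2) := by
        rw [show 2*m+3 = (2*m+2)+1 by ring, Nat.descFactorial_succ]
        congr 1
        omega
      rw [e]
      push_cast [h]
      ring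
    · rw [Nat.descFactorial_of_lt (by omega), Nat.descFactorial_of_lt (by omega)]
      simp
  have h2 : (((x+m+1).descFactorial (2*m+3) : ℕ):ℤ)
      = ((x:ℤ) + (m:ℤ)+1) * (((x+m).descFactorial (2*m+2) : ℕ):ℤ) := by
    have e := Nat.succ_descFactorial_succ (x+m) (2*m+2)
    rw [show 2*m+3 = 2*m+2+1 by ring, e]
    push_cast
    ring
  have h3 : (((x+m+2).descFactorial (2*m+4) : ℕ):ℤ)
      = ((x:ℤ) + (m:ℤ)+2) * (((x+m+1).descFactorial (2*m+3) : ℕ):ℤ) := by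
    have e := Nat.succ_descFactorial_succ (x+m+1) (2*m+3)
    rw [show 2*m+4 = 2*m+3+1 by ring, e]
    push_cast
    ring
  have h4 : (((x+m+1).descFactorial (2*m+4) : ℕ):ℤ)
      = ((x:ℤ) - ((m:ℤ)+2)) * (((x+m+1).descFactorial (2*m+3) : ℕ):ℤ) := by
    rcases le_or_gt (m+2) x with h | h
    · have e : (x+m+1).descFactorial (2*m+4) = (x - (m+2)) * (x+m+1).descFactorial (2*m+3) := by
        rw [show 2*m+4 = (2*m+3)+1 by ring, Nat.descFactorial_succ]
        congr 1
        omega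
      rw [e]
      push_cast [h]
      ring
    · rw [Nat.descFactorial_of_lt (by omega), Nat.descFactorial_of_lt (by omega)]
      simp
  linear_combination (-((x:ℤ)+(m:ℤ)+1))*h1 + (-((x:ℤ)-((m:ℤ)+1)))*h2 - h3 - h4

lemma ccStep (x m : ℕ) :
    (x:ℤ)^2 * cc x m = ((m:ℤ)+1)^2 * cc x m + (2*(m:ℤ)+3)*(2*(m:ℤ)+4) * cc x (m+1) := by
  have key := descStep x m
  have hA : (((x+m+1).descFactorial (2*m+2):ℕ):ℤ)
      = ((2*m+2).factorial:ℤ) * ((x+m+1).choose (2*m+2):ℤ) := by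
    exact_mod_cast Nat.descFactorial_eq_factorial_mul_choose (x+m+1) (2*m+2)
  have hB : (((x+m).descFactorial (2*m+2):ℕ):ℤ)
      = ((2*m+2).factorial:ℤ) * ((x+m).choose (2*m+2):ℤ) := by
    exact_mod_cast Nat.descFactorial_eq_factorial_mul_choose (x+m) (2*m+2)
  have hA' : (((x+m+2).descFactorial (2*m+4):ℕ):ℤ)
      = ((2*m+4).factorial:ℤ) * ((x+m+2).choose (2*m+4):ℤ) := by
    exact_mod_cast Nat.descFactorial_eq_factorial_mul_choose (x+m+2) (2*m+4)
  have hB' : (((x+m+1).descFactorial (2*m+4):ℕ):ℤ)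
      = ((2*m+4).factorial:ℤ) * ((x+m+1).choose (2*m+4):ℤ) := by
    exact_mod_cast Nat.descFactorial_eq_factorial_mul_choose (x+m+1) (2*m+4)
  have hfact : ((2*m+4).factorial:ℤ) = ((2*m+2).factorial:ℤ)*((2*(m:ℤ)+3)*(2*(m:ℤ)+4)) := by
    have e : (2*m+4).factorial = (2*m+2).factorial * ((2*m+3)*(2*m+4)) := by
      rw [show 2*m+4 = (2*m+3)+1 by ring, Nat.factorial_succ,
        show 2*m+3 = (2*m+2)+1 by ring, Nat.factorial_succ]
      ring
    exact_mod_cast e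
  have hne : ((2*m+2).factorial:ℤ) ≠ 0 := by exact_mod_cast (Nat.factorial_ne_zero _)
  apply mul_left_cancel₀ hne
  unfold cc
  simp only [show x+(m+1)+1 = x+m+2 by ring, show x+(m+1) = x+m+1 by ring,
    show 2*(m+1)+2 = 2*m+4 by ring]
  push_cast
  linear_combination key - ((x:ℤ)^2-((m:ℤ)+1)^2)*(hA+hB) + hA' + hB'
    + (((x+m+2).choose (2*m+4):ℤ) + ((x+m+1).choose (2*m+4):ℤ))*hfact

lemma base_c (x : ℕ) : (x+1).choose 2 + x.choose 2 = x^2 := by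
  induction x with
  | zero => rfl
  | succ x ih =>
    have h1 : (x+2).choose 2 = (x+1).choose 1 + (x+1).choose 2 := Nat.choose_succ_succ _ _
    have h2 : (x+1).choose 2 = x.choose 1 + x.choose 2 := Nat.choose_succ_succ _ _
    have h3 : (x+1).choose 1 = x+1 := Nat.choose_one_right _
    have h4 : x.choose 1 = x := Nat.choose_one_right _
    rw [show x+1+1 = x+2 by ring, h1, h3]
    rw [h2, h4] at ih ⊢
    have e : (x+1)^2 = x^2 + 2*x + 1 := by ring
    rw [e]
    omega

lemma R11 : R 1 1 = 1 := by decide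

lemma pointwise (k : ℕ) (hk : 1 ≤ k) (x : ℕ) :
    ((x:ℤ))^(2*k) = ∑ m ∈ range k, R k (m+1) * cc x m := by
  induction k, hk using Nat.le_induction with
  | base =>
    rw [Finset.sum_range_one, R11, one_mul]
    unfold cc
    have := base_c x
    simp only [show x+0+1 = x+1 by ring, show x+0 = x by ring, show 2*0+2 = 2 by ring,
      show (2:ℕ)*1 = 2 by ring]
    exact_mod_cast (base_c x).symm
  | succ k hk ih =>
    have hx : ((x:ℤ))^(2*(k+1)) = ((x:ℤ))^(2*k) * (x:ℤ)^2 := by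
      rw [← pow_add]
      congr 1
    rw [hx, ih, Finset.sum_mul]
    have e1 : ∀ m ∈ range k, R k (m+1) * cc x m * (x:ℤ)^2
        = ((m:ℤ)+1)^2 * R k (m+1) * cc x m
          + ((2*(m:ℤ)+3)*(2*(m:ℤ)+4) * R k (m+1)) * cc x (m+1) := by
      intro m _
      have := ccStep x m
      linear_combination (R k (m+1)) * this
    rw [Finset.sum_congr rfl e1, Finset.sum_add_distrib]
    -- first sum: extend range k to range (k+1) by adding zero term at m = k
    have eA : ∑ m ∈ range k, ((m:ℤ)+1)^2 * R k (m+1) * cc x m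
        = ∑ m ∈ range (k+1), ((m:ℤ)+1)^2 * R k (m+1) * cc x m := by
      rw [Finset.sum_range_succ, Rvanish k (k+1) hk (by omega)]
      ring
    -- second sum: shift index
    have eB : ∑ m ∈ range k, ((2*(m:ℤ)+3)*(2*(m:ℤ)+4) * R k (m+1)) * cc x (m+1)
        = ∑ m ∈ range (k+1), ((2*(m:ℤ)+1)*(2*(m:ℤ)+2) * R k m) * cc x m := by
      rw [Finset.sum_range_succ' (fun m => ((2*(m:ℤ)+1)*(2*(m:ℤ)+2) * R k m) * cc x m) k]
      rw [Rzero k hk]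
      push_cast
      simp only [mul_zero, zero_mul, add_zero]
      exact Finset.sum_congr rfl (fun m _ => by push_cast; ring)
    rw [eA, eB, ← Finset.sum_add_distrib]
    apply Finset.sum_congr rfl
    intro m _
    have hrec := Rrec k (m+1) (by omega)
    rw [show m+1-1 = m by omega] at hrec
    push_cast at hrec
    linear_combination (-(cc x m)) * hrec

lemma pascal2 (a b : ℕ) :
    (a+2).choose (b+1) = a.choose (b+1) + ((a+1).choose b + a.choose b) := by
  rw [show a+2 = (a+1)+1 from rfl]
  rw [Nat.choose_succ_succ (a+1) b, Nat.choose_succ_succ a b]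
  simp only [Nat.succ_eq_add_one]
  omega

theorem main (k : ℕ) (hk : 1 ≤ k) : ∀ n : ℕ,
    (2 ^ (2*k) * S (2*k) n : ℤ)
      = ∑ i ∈ range k, R k (i+1) * ((2*n+(i+1)+1).choose (2*(i+1)+1) : ℤ) := by
  intro n
  induction n with
  | zero =>
    have hS : S (2*k) 0 = 0 := by simp [S]
    rw [hS]
    have : ∀ i ∈ range k, R k (i+1) * ((2*0+(i+1)+1).choose (2*(i+1)+1) : ℤ) = 0 := by
      intro i _
      have : (2*0+(i+1)+1).choose (2*(i+1)+1) = 0 :=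
        Nat.choose_eq_zero_of_lt (by omega)
      rw [this]
      simp
    rw [Finset.sum_congr rfl this]
    simp
  | succ n ih =>
    have hS : S (2*k) (n+1) = S (2*k) n + (n+1)^(2*k) := by
      unfold S
      rw [Finset.sum_Icc_succ_top (by omega : 1 ≤ n+1)]
    rw [hS]
    push_cast
    rw [mul_add, ih]
    have hpt := pointwise k hk (2*n+2)
    have hpow : (2:ℤ)^(2*k) * ((n:ℤ)+1)^(2*k) = (((2*n+2:ℕ)):ℤ)^(2*k) := by
      rw [← mul_pow]
      push_cast
      ring_nf
    rw [hpow, hpt]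
    have split : ∀ i ∈ range k,
        R k (i+1) * ((2*(n+1)+(i+1)+1).choose (2*(i+1)+1) : ℤ)
        = R k (i+1) * ((2*n+(i+1)+1).choose (2*(i+1)+1) : ℤ) + R k (i+1) * cc (2*n+2) i := by
      intro i _
      have e := pascal2 (2*n+(i+1)+1) (2*(i+1))
      have e2 : 2*(n+1)+(i+1)+1 = (2*n+(i+1)+1)+2 := by ring
      rw [e2, show 2*(i+1)+1 = 2*(i+1)+1 from rfl]
      have e3 : (((2*n+(i+1)+1)+2).choose (2*(i+1)+1) : ℤ)
          = ((2*n+(i+1)+1).choose (2*(i+1)+1) : ℤ)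
            + (((2*n+(i+1)+2).choose (2*(i+1)) : ℤ) + ((2*n+(i+1)+1).choose (2*(i+1)) : ℤ)) := by
      -- from pascal2 with b+1 = 2*(i+1)+1
        have := pascal2 (2*n+(i+1)+1) (2*(i+1))
        exact_mod_cast congrArg (Nat.cast : ℕ → ℤ) this
      rw [e3]
      unfold cc
      have c1 : 2*n+2+i+1 = 2*n+(i+1)+2 := by ring
      have c2 : 2*n+2+i = 2*n+(i+1)+1 := by ring
      have c3 : 2*i+2 = 2*(i+1) := by ring
      rw [c1, c2, c3]
      ring
    rw [Finset.sum_congr rfl split, Finset.sum_add_distrib]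

theorem stmt_0 (k n : ℕ) (hk : 1 ≤ k) (hn : 1 ≤ n) :
    (2 ^ (2 * k) * S (2 * k) n : ℤ) =
      ∑ m ∈ Finset.Icc 1 k, R k m * ((2 * n + m + 1).choose (2 * m + 1) : ℤ) := by
  have conv : ∑ m ∈ Finset.Icc 1 k, R k m * ((2*n+m+1).choose (2*m+1) : ℤ)
      = ∑ i ∈ range k, R k (i+1) * ((2*n+(i+1)+1).choose (2*(i+1)+1) : ℤ) := by
    rw [← Finset.Ico_add_one_right_eq_Icc, Finset.sum_Ico_eq_sum_range]
    simp only [show k+1-1 = k by omega]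
    exact Finset.sum_congr rfl (fun i _ => by rw [show 1+i = i+1 by ring])
  rw [conv]
  exact main k hk n
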